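/- If n and m are coprime positive integers greater than 1 and no odd Fibonacci number is divisible by n·m, then no odd Fibonacci number is divisible by n, or no odd Fibonacci number is divisible by m. -/

import Mathlib

lemma even_fib_iff (k : ℕ) : Even (Nat.fib k) ↔ 3 ∣ k := by
  constructor
  · intro h
    by_contra h3
    have h2 : (2 : ℕ) ∣ Nat.fib k := even_iff_two_dvd.mp h
    have : (2 : ℕ) ∣ Nat.gcd (Nat.fib 3) (Nat.fib k) := by
      simpa [Nat.fib] using Nat.dvd_gcd (by norm_num [Nat.fib]) h2
    rw [← Nat.fib_gcd] at this
    have hg : Nat.gcd 3 k = 1 :=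
      ((Nat.Prime.coprime_iff_not_dvd (by norm_num)).mpr h3).gcd_eq_one
    simp [hg, Nat.fib] at this
  · intro h
    have := Nat.fib_dvd 3 k h
    exact even_iff_two_dvd.mpr (by simpa [Nat.fib] using this)

theorem no_odd_fib_div_mul (n m : ℕ) (hn : 1 < n) (hm : 1 < m) (hco : Nat.Coprime n m)
    (h : ∀ k : ℕ, Odd (Nat.fib k) → ¬ (n * m ∣ Nat.fib k)) :
    (∀ k : ℕ, Odd (Nat.fib k) → ¬ (n ∣ Nat.fib k)) ∨
    (∀ k : ℕ, Odd (Nat.fib k) → ¬ (m ∣ Nat.fib k)) := by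
  by_contra hc
  push_neg at hc
  obtain ⟨⟨a, ha1, ha2⟩, ⟨b, hb1, hb2⟩⟩ := hc
  set L := Nat.lcm a b with hL
  have h3a : ¬ 3 ∣ a := fun hd => (Nat.not_even_iff_odd.mpr ha1) ((even_fib_iff a).mpr hd)
  have h3b : ¬ 3 ∣ b := fun hd => (Nat.not_even_iff_odd.mpr hb1) ((even_fib_iff b).mpr hd)
  have h3L : ¬ 3 ∣ L := by
    intro hd
    have := hd.trans (Nat.lcm_dvd_mul a b)
    rcases (Nat.Prime.dvd_mul (by norm_num)).mp this with h' | h'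
    · exact h3a h'
    · exact h3b h'
  have hodd : Odd (Nat.fib L) := Nat.not_even_iff_odd.mp (fun he => h3L ((even_fib_iff L).mp he))
  have hnL : n ∣ Nat.fib L := ha2.trans (Nat.fib_dvd a L (Nat.dvd_lcm_left a b))
  have hmL : m ∣ Nat.fib L := hb2.trans (Nat.fib_dvd b L (Nat.dvd_lcm_right a b))
  exact h L hodd (Nat.Coprime.mul_dvd_of_dvd_of_dvd hco hnL hmL)
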